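/- Let G be a u×v matrix whose entries are proper rational functions in RatFunc ℝ with no poles on the imaginary axis, and let Gc : ℝ → (u×v complex matrices) be defined by entrywise evaluation at iω. Then the function ω ↦ ‖Gc(ω)‖ is bounded on ℝ; that is, there exists B ∈ ℝ such that ‖Gc(ω)‖ ≤ B for all ω ∈ ℝ. -/

import Mathlib

open Matrix Polynomial
open scoped Matrix.Norms.L2Operator

open Filter Bornology
open scoped Topology


theorem scalarBound (p q : Polynomial ℝ) (hdeg : p.degree ≤ q.degree)
    (hq : ∀ ω : ℝ, (Polynomial.aeval ((ω : ℂ) * Complex.I)) q ≠ 0) :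
    ∃ C : ℝ, ∀ ω : ℝ,
      ‖(Polynomial.aeval ((ω : ℂ) * Complex.I)) p /
        (Polynomial.aeval ((ω : ℂ) * Complex.I)) q‖ ≤ C := by
  have hq0 : q ≠ 0 := by
    intro h; exact hq 0 (by simp [h])
  set P : Polynomial ℂ := p.map (algebraMap ℝ ℂ) with hP
  set Q : Polynomial ℂ := q.map (algebraMap ℝ ℂ) with hQ
  have hevP : ∀ z : ℂ, (Polynomial.aeval z) p = P.eval z := by
    intro z; rw [aeval_def, ← eval_map]
  have hevQ : ∀ z : ℂ, (Polynomial.aeval z) q = Q.eval z := by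
    intro z; rw [aeval_def, ← eval_map]
  have hinj : Function.Injective (algebraMap ℝ ℂ) := (algebraMap ℝ ℂ).injective
  have hQ0 : Q ≠ 0 := by
    simpa [hQ, Polynomial.map_ne_zero_iff hinj] using hq0
  set N : ℕ := Q.natDegree with hN
  have hPdeg : P.natDegree ≤ N := by
    rw [hN, hP, hQ, natDegree_map_eq_of_injective hinj, natDegree_map_eq_of_injective hinj]
    exact natDegree_le_natDegree hdeg
  set Pr := reflect N P with hPr
  set Qr := reflect N Q with hQr
  have hQr0 : Qr.eval 0 ≠ 0 := by
    rw [hQr, ← coeff_zero_eq_eval_zero, coeff_reflect, revAt_le (Nat.zero_le N),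
      Nat.sub_zero, hN, coeff_natDegree]
    exact leadingCoeff_ne_zero.mpr hQ0
  set h : ℝ → ℂ := fun ω => P.eval ((ω : ℂ) * Complex.I) / Q.eval ((ω : ℂ) * Complex.I) with hh
  set c : ℂ := Pr.eval 0 / Qr.eval 0 with hc
  have stepa : Tendsto (fun ω : ℝ => (((ω : ℂ) * Complex.I))⁻¹) (cocompact ℝ) (𝓝 0) := by
    apply Filter.tendsto_inv₀_cobounded.comp
    rw [← tendsto_norm_atTop_iff_cobounded]
    have : (fun ω : ℝ => ‖(ω : ℂ) * Complex.I‖) = fun ω : ℝ => ‖ω‖ := by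
      funext ω; simp
    rw [this, ← Metric.cobounded_eq_cocompact]
    exact tendsto_norm_cobounded_atTop
  set F : ℂ → ℂ := fun w => Pr.eval w / Qr.eval w with hF
  have stepb : ContinuousAt F 0 :=
    (Pr.continuousAt).div (Qr.continuousAt) hQr0
  have hF0 : F 0 = c := rfl
  have stepc : ∀ ω : ℝ, ω ≠ 0 → h ω = F (((ω : ℂ) * Complex.I))⁻¹ := by
    intro ω hω
    set z : ℂ := (ω : ℂ) * Complex.I with hz
    have hz0 : z ≠ 0 := by
      simp [hz, Complex.ext_iff, hω, Complex.I_ne_zero]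
    letI := invertibleOfNonzero hz0
    have hPid : Pr.eval z⁻¹ * z ^ N = P.eval z := by
      have := eval₂_reflect_mul_pow (RingHom.id ℂ) z N P hPdeg
      rwa [invOf_eq_inv] at this
    have hQid : Qr.eval z⁻¹ * z ^ N = Q.eval z := by
      have := eval₂_reflect_mul_pow (RingHom.id ℂ) z N Q le_rfl
      rwa [invOf_eq_inv] at this
    have hzN : z ^ N ≠ 0 := pow_ne_zero _ hz0
    rw [hh, hF]
    simp only
    rw [← hPid, ← hQid, mul_div_mul_right _ _ hzN]
  -- tendsto of h along cocompact
  have hev : ∀ᶠ ω : ℝ in cocompact ℝ, h ω = F (((ω : ℂ) * Complex.I))⁻¹ := by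
    have hmem : ({(0:ℝ)}ᶜ : Set ℝ) ∈ cocompact ℝ :=
      mem_cocompact.mpr ⟨{0}, isCompact_singleton, fun x hx => hx⟩
    filter_upwards [hmem] with ω hω
    exact stepc ω hω
  have T : Tendsto h (cocompact ℝ) (𝓝 c) := by
    have : Tendsto (fun ω : ℝ => F (((ω : ℂ) * Complex.I))⁻¹) (cocompact ℝ) (𝓝 c) := by
      rw [← hF0]; exact stepb.tendsto.comp stepa
    exact Tendsto.congr' (hev.mono fun ω e => e.symm) this
  -- eventual bound
  have Tn : Tendsto (fun ω => ‖h ω‖) (cocompact ℝ) (𝓝 ‖c‖) := T.norm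
  have hevb : ∀ᶠ ω : ℝ in cocompact ℝ, ‖h ω‖ < ‖c‖ + 1 :=
    Tn.eventually_lt_const (lt_add_one _)
  obtain ⟨K, hK, hKs⟩ := mem_cocompact.mp hevb
  -- bound on the compact set
  have hcont : Continuous h := by
    apply Continuous.div
    · exact P.continuous.comp (Complex.continuous_ofReal.mul continuous_const)
    · exact Q.continuous.comp (Complex.continuous_ofReal.mul continuous_const)
    · intro ω
      rw [← hevQ]; exact hq ω
  obtain ⟨C₀, hC₀⟩ := hK.exists_bound_of_continuousOn hcont.continuousOn
  refine ⟨max C₀ (‖c‖ + 1), fun ω => ?_⟩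
  have : ‖(Polynomial.aeval ((ω : ℂ) * Complex.I)) p /
      (Polynomial.aeval ((ω : ℂ) * Complex.I)) q‖ = ‖h ω‖ := by
    rw [hh]; simp only [hevP, hevQ]
  rw [this]
  by_cases hω : ω ∈ K
  · exact le_max_of_le_left (hC₀ ω hω)
  · exact le_max_of_le_right (hKs hω).le

open Matrix Polynomial Filter Bornology
open scoped Matrix.Norms.L2Operator

theorem coordBound {n : ℕ} (x : EuclideanSpace ℂ (Fin n)) (k : Fin n) : ‖x k‖ ≤ ‖x‖ := by
  rw [EuclideanSpace.norm_eq]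
  calc ‖x k‖ = Real.sqrt (‖x k‖ ^ 2) := (Real.sqrt_sq (norm_nonneg _)).symm
    _ ≤ _ := Real.sqrt_le_sqrt (Finset.single_le_sum
        (f := fun i => ‖x i‖ ^ 2) (fun i _ => sq_nonneg _) (Finset.mem_univ k))

theorem stdBound {u v : ℕ} (j : Fin u) (k : Fin v) (c : ℂ) :
    ‖Matrix.single j k c‖ ≤ ‖c‖ := by
  rw [Matrix.l2_opNorm_def]
  apply ContinuousLinearMap.opNorm_le_bound _ (norm_nonneg c)
  intro x
  have happ : (Matrix.toEuclideanLin (Matrix.single j k c)) x =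
      (WithLp.equiv 2 (Fin u → ℂ)).symm
        (Matrix.single j k c *ᵥ (WithLp.equiv 2 (Fin v → ℂ)) x) :=
    Matrix.toEuclideanLin_apply _ _
  have hmv : Matrix.single j k c *ᵥ (WithLp.equiv 2 (Fin v → ℂ)) x
      = Pi.single j (c * x k) := by
    funext j'
    simp [Matrix.mulVec, dotProduct, Matrix.single, Pi.single_apply,
      ite_and, Finset.sum_ite_eq]
    split <;> simp_all [eq_comm]
  calc ‖(Matrix.toEuclideanLin (Matrix.single j k c)).toContinuousLinearMap x‖
      = ‖(WithLp.equiv 2 (Fin u → ℂ)).symm (Pi.single j (c * x k))‖ := by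
        rw [show (Matrix.toEuclideanLin (Matrix.single j k c)).toContinuousLinearMap x
          = (Matrix.toEuclideanLin (Matrix.single j k c)) x from rfl, happ, hmv]
    _ = ‖c * x k‖ := by
        rw [show ((WithLp.equiv 2 (Fin u → ℂ)).symm (Pi.single j (c * x k)) : EuclideanSpace ℂ (Fin u))
          = EuclideanSpace.single j (c * x k) from rfl, EuclideanSpace.norm_single]
    _ ≤ ‖c‖ * ‖x‖ := by
        rw [norm_mul]
        exact mul_le_mul_of_nonneg_left (coordBound x k) (norm_nonneg c)

theorem matNormBound {u v : ℕ} (A : Matrix (Fin u) (Fin v) ℂ) :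
    ‖A‖ ≤ ∑ j : Fin u, ∑ k : Fin v, ‖A j k‖ := by
  conv_lhs => rw [Matrix.matrix_eq_sum_single A]
  refine (norm_sum_le _ _).trans (Finset.sum_le_sum fun j _ => ?_)
  refine (norm_sum_le _ _).trans (Finset.sum_le_sum fun k _ => ?_)
  exact stdBound j k (A j k)

/-- Let `G` be a `u × v` matrix of proper real rational functions with no poles
on the imaginary axis, and let `Gc ω` be its entrywise evaluation at `iω`.  Then the function
`ω ↦ ‖Gc ω‖` (L2 operator norm) is bounded on `ℝ`. -/
theorem stmt7 (u v : ℕ) (G : Matrix (Fin u) (Fin v) (RatFunc ℝ))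
    (hproper : ∀ j k, (G j k).num.degree ≤ (G j k).denom.degree)
    (hpoles : ∀ j k, ∀ ω : ℝ, (Polynomial.aeval ((ω : ℂ) * Complex.I)) (G j k).denom ≠ 0)
    (Gc : ℝ → Matrix (Fin u) (Fin v) ℂ)
    (hGc : ∀ ω j k, Gc ω j k =
        (Polynomial.aeval ((ω : ℂ) * Complex.I)) (G j k).num /
        (Polynomial.aeval ((ω : ℂ) * Complex.I)) (G j k).denom) :
    ∃ B : ℝ, ∀ ω : ℝ, ‖Gc ω‖ ≤ B := by
  have hscalar : ∀ (j : Fin u) (k : Fin v), ∃ C : ℝ, ∀ ω : ℝ, ‖Gc ω j k‖ ≤ C := by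
    intro j k
    obtain ⟨C, hC⟩ := scalarBound (G j k).num (G j k).denom (hproper j k) (hpoles j k)
    exact ⟨C, fun ω => by rw [hGc ω j k]; exact hC ω⟩
  choose C hC using hscalar
  refine ⟨∑ j : Fin u, ∑ k : Fin v, C j k, fun ω => ?_⟩
  refine (matNormBound (Gc ω)).trans ?_
  refine Finset.sum_le_sum fun j _ => Finset.sum_le_sum fun k _ => hC j k ω
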